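/- Let M be a positive integer, let a_1,…,a_M > 0 and b_0, b_1,…,b_{M−1} > 0 be real numbers, and for real q > −b_0 define η(q) = exp( ∫_0^∞ [ (e^{−tq} − 1) e^{−b_0 t} ∏_{j=1}^{M−1} (1 − e^{−b_j t}) / ∏_{i=1}^M (1 − e^{−a_i t}) + q e^{−t} (∏_{j=1}^{M−1} b_j)/(∏_{i=1}^M a_i) ] dt/t ). Then there exists a constant C > 0 such that | log η(q) − (∏_{j=1}^{M−1} b_j)/(∏_{i=1}^M a_i) · q log q | ≤ C q for all real q ≥ 1. -/

import Mathlib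

open MeasureTheory

open Set Real Filter

lemma frullani_aux (q : ℝ) (hq : 1 ≤ q) :
    Integrable (Function.uncurry fun (u t : ℝ) => Real.exp (-(u*t)))
      ((volume.restrict (Ioc 1 q)).prod (volume.restrict (Ioi 0))) := by
  have hmeas : AEStronglyMeasurable (Function.uncurry fun (u t : ℝ) => Real.exp (-(u*t)))
      ((volume.restrict (Ioc 1 q)).prod (volume.restrict (Ioi 0))) := by
    apply Continuous.aestronglyMeasurable
    fun_prop
  rw [integrable_prod_iff hmeas]
  constructor
  · filter_upwards [ae_restrict_mem measurableSet_Ioc] with u hu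
    have hu0 : 0 < u := lt_of_lt_of_le one_pos hu.1.le
    have := exp_neg_integrableOn_Ioi 0 hu0
    exact this.congr_fun (fun t _ => by simp [Function.uncurry]) measurableSet_Ioi
  · have key : ∀ u ∈ Ioc (1:ℝ) q,
        (∫ t in Ioi (0:ℝ), ‖Real.exp (-(u*t))‖) = 1/u := by
      intro u hu
      have hu0 : 0 < u := lt_of_lt_of_le one_pos hu.1.le
      have : (∫ t in Ioi (0:ℝ), ‖Real.exp (-(u*t))‖) = ∫ t in Ioi (0:ℝ), Real.exp (-(u*t)) := by
        congr 1; ext t; exact Real.norm_of_nonneg (Real.exp_pos _).le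
      rw [this]
      have := integral_comp_mul_left_Ioi (fun x => Real.exp (-x)) 0 hu0
      simp only [mul_zero] at this
      rw [this, integral_exp_neg_Ioi_zero]
      simp [one_div]
    have hint : IntegrableOn (fun u : ℝ => 1/u) (Ioc 1 q) := by
      apply (ContinuousOn.integrableOn_compact isCompact_Icc ?_).mono_set Ioc_subset_Icc_self
      exact ContinuousOn.div continuousOn_const continuousOn_id
        (fun x hx => by have := hx.1; positivity)
    exact hint.congr_fun (fun u hu => (key u hu).symm) measurableSet_Ioc

lemma frullani (q : ℝ) (hq : 1 ≤ q) :
    IntegrableOn (fun t : ℝ => (Real.exp (-t) - Real.exp (-(q*t)))/t) (Ioi 0) ∧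
    (∫ t in Ioi (0:ℝ), (Real.exp (-t) - Real.exp (-(q*t)))/t) = Real.log q := by
  have haux := frullani_aux q hq
  have hswap := integral_integral_swap haux
  -- inner integral in u
  have hinner : ∀ t ∈ Ioi (0:ℝ),
      (∫ u in Ioc (1:ℝ) q, Real.exp (-(u*t))) = (Real.exp (-t) - Real.exp (-(q*t)))/t := by
    intro t ht
    have ht0 : (0:ℝ) < t := ht
    rw [← intervalIntegral.integral_of_le hq]
    have : ∫ u in (1:ℝ)..q, Real.exp (-(u*t)) =
        (fun u => -Real.exp (-(u*t))/t) q - (fun u => -Real.exp (-(u*t))/t) 1 := by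
      apply intervalIntegral.integral_eq_sub_of_hasDerivAt
      · intro u _
        have h1 : HasDerivAt (fun u : ℝ => -(u*t)) (-t) u := by
          exact (((hasDerivAt_id u).mul_const t).neg).congr_deriv (by ring)
        have h2 : HasDerivAt (fun u : ℝ => Real.exp (-(u*t))) (Real.exp (-(u*t)) * (-t)) u :=
          (Real.hasDerivAt_exp _).comp u h1
        have := (h2.neg).div_const t
        exact this.congr_deriv (by field_simp)
      · apply Continuous.intervalIntegrable; fun_prop
    rw [this]; ring_nf
  -- marginal integrability
  have hmarg : Integrable (fun t : ℝ => ∫ u in Ioc (1:ℝ) q, Real.exp (-(u*t)))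
      (volume.restrict (Ioi 0)) := haux.integral_prod_right
  constructor
  · exact (IntegrableOn.congr_fun (hmarg : IntegrableOn _ _ _) hinner measurableSet_Ioi)
  · have hL : (∫ u in Ioc (1:ℝ) q, ∫ t in Ioi (0:ℝ), Real.exp (-(u*t))) = Real.log q := by
      have : ∀ u ∈ Ioc (1:ℝ) q, (∫ t in Ioi (0:ℝ), Real.exp (-(u*t))) = 1/u := by
        intro u hu
        have hu0 : 0 < u := lt_of_lt_of_le one_pos hu.1.le
        have := integral_comp_mul_left_Ioi (fun x => Real.exp (-x)) 0 hu0
        simp only [mul_zero] at this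
        rw [this, integral_exp_neg_Ioi_zero]; simp [one_div]
      rw [setIntegral_congr_fun measurableSet_Ioc this, ← intervalIntegral.integral_of_le hq,
        integral_one_div (by intro h; rw [Set.mem_uIcc] at h; rcases h with ⟨h1,_⟩|⟨_,h2⟩ <;> linarith)]
      simp
    rw [← setIntegral_congr_fun measurableSet_Ioi hinner]
    exact hswap.symm.trans hL

lemma aux_one_sub_exp_le {x : ℝ} (hx : 0 ≤ x) : 1 - Real.exp (-x) ≤ x := by
  nlinarith [Real.add_one_le_exp (-x)]

lemma aux_mul_exp_le (x : ℝ) : x * Real.exp (-x) ≤ 1 - Real.exp (-x) := by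
  have h := Real.add_one_le_exp x
  have hp := Real.exp_pos x
  have he : Real.exp (-x) = (Real.exp x)⁻¹ := Real.exp_neg x
  rw [he]
  have := mul_le_mul_of_nonneg_right h (le_of_lt (inv_pos.mpr hp))
  rw [mul_inv_cancel₀ (ne_of_gt hp)] at this
  nlinarith

lemma J_lemma (q : ℝ) (hq : 1 ≤ q)
    (hfr_int : IntegrableOn (fun t : ℝ => (Real.exp (-t) - Real.exp (-(q*t)))/t) (Ioi 0))
    (hfr_val : (∫ t in Ioi (0:ℝ), (Real.exp (-t) - Real.exp (-(q*t)))/t) = Real.log q) :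
    IntegrableOn (fun t : ℝ => ((Real.exp (-(q*t)) - 1)/t + q * Real.exp (-t))/t) (Ioi 0) ∧
    (∫ t in Ioi (0:ℝ), ((Real.exp (-(q*t)) - 1)/t + q * Real.exp (-t))/t)
      = q * Real.log q - q := by
  have hq0 : 0 < q := lt_of_lt_of_le one_pos hq
  set H : ℝ → ℝ := fun t => if t = 0 then q else (1 - Real.exp (-(q*t)))/t with hH
  set H' : ℝ → ℝ := fun t => (q*t*Real.exp (-(q*t)) - (1 - Real.exp (-(q*t))))/t^2 with hH'
  have hderiv : ∀ t ∈ Ioi (0:ℝ), HasDerivAt H (H' t) t := by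
    intro t ht
    have ht0 : (0:ℝ) < t := ht
    have hn : HasDerivAt (fun s : ℝ => 1 - Real.exp (-(q*s))) (q * Real.exp (-(q*t))) t := by
      have h1 : HasDerivAt (fun s : ℝ => -(q*s)) (-q) t := by
        exact (((hasDerivAt_id t).const_mul q).neg).congr_deriv (by ring)
      have h2 := (Real.hasDerivAt_exp (-(q*t))).comp t h1
      have := h2.const_sub 1
      exact this.congr_deriv (by ring)
    have hd : HasDerivAt (fun s : ℝ => (1 - Real.exp (-(q*s)))/s)
        ((q * Real.exp (-(q*t)) * t - (1 - Real.exp (-(q*t))) * 1)/t^2) t :=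
      hn.div (hasDerivAt_id t) (ne_of_gt ht0)
    have heq : (fun s : ℝ => (1 - Real.exp (-(q*s)))/s) =ᶠ[nhds t] H := by
      filter_upwards [eventually_ne_nhds (ne_of_gt ht0)] with s hs
      simp [hH, hs]
    have := hd.congr_of_eventuallyEq heq.symm
    exact this.congr_deriv (by simp [hH']; ring)
  have hcont : ContinuousWithinAt H (Ici 0) 0 := by
    have hslope : Tendsto (fun t : ℝ => (1 - Real.exp (-(q*t)))/t) (nhdsWithin 0 {(0:ℝ)}ᶜ)
        (nhds q) := by
      have hn : HasDerivAt (fun s : ℝ => 1 - Real.exp (-(q*s))) q 0 := by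
        have h1 : HasDerivAt (fun s : ℝ => -(q*s)) (-q) 0 := by
          exact (((hasDerivAt_id (0:ℝ)).const_mul q).neg).congr_deriv (by ring)
        have h2 := (Real.hasDerivAt_exp (-(q*0))).comp 0 h1
        have h3 := h2.const_sub 1
        exact h3.congr_deriv (by simp)
      have := hasDerivAt_iff_tendsto_slope.mp hn
      refine this.congr' ?_
      filter_upwards [self_mem_nhdsWithin] with s hs
      simp [slope, hs, sub_zero]
      ring_nf
    unfold ContinuousWithinAt
    have hval : H 0 = q := by simp [hH]
    rw [hval]
    have hsub : nhdsWithin (0:ℝ) (Ici 0) ≤ nhdsWithin 0 {(0:ℝ)}ᶜ ⊔ pure 0 := by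
      rw [← nhdsWithin_singleton (0:ℝ), ← nhdsWithin_union]
      apply nhdsWithin_mono
      intro x _
      by_cases hx : x = 0 <;> simp [hx]
    refine Tendsto.mono_left ?_ hsub
    rw [tendsto_sup]
    constructor
    · refine hslope.congr' ?_
      filter_upwards [self_mem_nhdsWithin] with s hs
      have hs' : s ≠ 0 := hs
      simp [hH, hs']
    · simpa [hval] using (tendsto_pure_nhds H 0)
  have htop : Tendsto H atTop (nhds 0) := by
    apply squeeze_zero' (g := fun t : ℝ => 1/t)
    · filter_upwards [eventually_gt_atTop 0] with t ht
      simp only [hH, if_neg (ne_of_gt ht)]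
      apply div_nonneg _ ht.le
      have : Real.exp (-(q*t)) ≤ Real.exp 0 := Real.exp_le_exp.mpr (by nlinarith)
      rw [Real.exp_zero] at this; linarith
    · filter_upwards [eventually_gt_atTop 0] with t ht
      simp only [hH, if_neg (ne_of_gt ht)]
      have h1 : 1 - Real.exp (-(q*t)) ≤ 1 := by linarith [Real.exp_pos (-(q*t))]
      gcongr
    · simpa [one_div] using tendsto_inv_atTop_zero
  -- bound on H'
  have hH'bound : ∀ t : ℝ, 0 < t → |H' t| ≤ min (q^2) (1/t^2) := by
    intro t ht
    have hx : 0 ≤ q*t := by positivity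
    have h1 : 0 ≤ 1 - Real.exp (-(q*t)) - q*t*Real.exp (-(q*t)) := by
      have := aux_mul_exp_le (q*t); linarith
    have h2 : 1 - Real.exp (-(q*t)) - q*t*Real.exp (-(q*t)) ≤ 1 := by
      have := Real.exp_pos (-(q*t)); nlinarith
    have h3 : 1 - Real.exp (-(q*t)) - q*t*Real.exp (-(q*t)) ≤ (q*t)^2 := by
      have ha := aux_one_sub_exp_le hx
      have hb := aux_mul_exp_le (q*t)
      have hc := aux_one_sub_exp_le hx
      nlinarith [Real.exp_pos (-(q*t)), mul_le_mul_of_nonneg_left ha hx]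
    have habs : |H' t| = (1 - Real.exp (-(q*t)) - q*t*Real.exp (-(q*t)))/t^2 := by
      rw [hH']
      rw [abs_div, abs_of_nonneg (by positivity : (0:ℝ) ≤ t^2), abs_of_nonpos (by linarith)]
      ring_nf
    rw [habs]
    apply le_min
    · rw [div_le_iff₀ (by positivity)]
      calc 1 - Real.exp (-(q*t)) - q*t*Real.exp (-(q*t)) ≤ (q*t)^2 := h3
        _ = q^2 * t^2 := by ring
    · rw [div_le_div_iff₀ (by positivity) (by positivity)]
      nlinarith
  have hH'cont : ContinuousOn H' (Ioi 0) := by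
    apply ContinuousOn.div (by fun_prop) (by fun_prop)
    exact fun t ht => pow_ne_zero 2 (ne_of_gt ht)
  have hH'int : IntegrableOn H' (Ioi 0) := by
    have hu : Ioc (0:ℝ) 1 ∪ Ioi 1 = Ioi 0 := Ioc_union_Ioi_eq_Ioi (le_of_lt one_pos)
    rw [← hu]
    apply IntegrableOn.union
    · apply Integrable.mono' (g := fun _ : ℝ => q^2)
        ((integrableOn_const_iff).mpr (Or.inr (by simp)))
        ((hH'cont.mono Ioc_subset_Ioi_self).aestronglyMeasurable measurableSet_Ioc)
      filter_upwards [ae_restrict_mem measurableSet_Ioc] with t ht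
      exact le_trans (le_trans (le_of_eq (Real.norm_eq_abs _)) (hH'bound t ht.1)) (min_le_left _ _)
    · have hpow : IntegrableOn (fun t : ℝ => t ^ (-2 : ℝ)) (Ioi 1) :=
        integrableOn_Ioi_rpow_of_lt (by norm_num) one_pos
      apply Integrable.mono' (hpow.congr_fun (fun t ht => ?_) measurableSet_Ioi)
      · exact (hH'cont.mono (Ioi_subset_Ioi (le_of_lt one_pos))).aestronglyMeasurable measurableSet_Ioi
      · filter_upwards [ae_restrict_mem measurableSet_Ioi] with t ht
        calc ‖H' t‖ ≤ min (q^2) (1/t^2) := hH'bound t (lt_trans one_pos ht)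
          _ ≤ 1/t^2 := min_le_right _ _
      · have ht1 : (0:ℝ) < t := lt_trans one_pos ht
        beta_reduce; rw [Real.rpow_neg ht1.le]
        rw [show ((2:ℝ)) = ((2:ℕ):ℝ) by norm_num, Real.rpow_natCast]
        rw [one_div]
  have hH'val : (∫ t in Ioi (0:ℝ), H' t) = -q := by
    have := integral_Ioi_of_hasDerivAt_of_tendsto hcont hderiv hH'int htop
    rw [this]
    simp [hH]
  -- pointwise identity
  have hpt : ∀ t ∈ Ioi (0:ℝ),
      H' t + q * ((Real.exp (-t) - Real.exp (-(q*t)))/t)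
        = ((Real.exp (-(q*t)) - 1)/t + q * Real.exp (-t))/t := by
    intro t ht
    have ht0 : (0:ℝ) < t := ht
    rw [hH']
    field_simp
    ring
  have hintsum : IntegrableOn
      (fun t : ℝ => H' t + q * ((Real.exp (-t) - Real.exp (-(q*t)))/t)) (Ioi 0) :=
    hH'int.add (hfr_int.const_mul q)
  constructor
  · exact hintsum.congr_fun hpt measurableSet_Ioi
  · rw [← setIntegral_congr_fun measurableSet_Ioi hpt,
      integral_add hH'int (hfr_int.const_mul q), hH'val,
      integral_const_mul, hfr_val]
    ring

lemma exp_prod_pos (s : Finset ℕ) (c : ℕ → ℝ) (hc : ∀ i ∈ s, 0 < c i) (t : ℝ) (ht : 0 < t) :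
    0 < ∏ i ∈ s, (1 - Real.exp (-(c i) * t)) := by
  apply Finset.prod_pos
  intro i hi
  have : Real.exp (-(c i)*t) < Real.exp 0 := Real.exp_lt_exp.mpr (by nlinarith [hc i hi])
  rw [Real.exp_zero] at this; linarith

lemma exp_prod_le_one (s : Finset ℕ) (c : ℕ → ℝ) (hc : ∀ i ∈ s, 0 < c i) (t : ℝ) (ht : 0 < t) :
    ∏ i ∈ s, (1 - Real.exp (-(c i) * t)) ≤ 1 := by
  apply Finset.prod_le_one
  · intro i hi
    have : Real.exp (-(c i)*t) ≤ Real.exp 0 := Real.exp_le_exp.mpr (by nlinarith [hc i hi])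
    rw [Real.exp_zero] at this; linarith
  · intro i hi
    linarith [Real.exp_pos (-(c i)*t)]

lemma exp_prod_upper (s : Finset ℕ) (c : ℕ → ℝ) (hc : ∀ i ∈ s, 0 < c i) (t : ℝ) (ht : 0 < t) :
    ∏ i ∈ s, (1 - Real.exp (-(c i) * t)) ≤ (∏ i ∈ s, c i) * t ^ s.card := by
  calc ∏ i ∈ s, (1 - Real.exp (-(c i) * t))
      ≤ ∏ i ∈ s, (c i * t) := by
        apply Finset.prod_le_prod
        · intro i hi
          have : Real.exp (-(c i)*t) ≤ Real.exp 0 := Real.exp_le_exp.mpr (by nlinarith [hc i hi])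
          rw [Real.exp_zero] at this; linarith
        · intro i hi
          linarith [Real.add_one_le_exp (-(c i) * t)]
    _ = (∏ i ∈ s, c i) * t ^ s.card := by
        rw [Finset.prod_mul_distrib, Finset.prod_const]

lemma exp_prod_lower (s : Finset ℕ) (c : ℕ → ℝ) (hc : ∀ i ∈ s, 0 < c i) (t : ℝ) (ht : 0 < t) :
    (∏ i ∈ s, c i) * t ^ s.card * Real.exp (-((∑ i ∈ s, c i) * t))
      ≤ ∏ i ∈ s, (1 - Real.exp (-(c i) * t)) := by
  have key : ∀ i ∈ s, c i * t * Real.exp (-(c i) * t) ≤ 1 - Real.exp (-(c i) * t) := by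
    intro i hi
    have : -(c i) * t = -(c i * t) := by ring
    rw [this]
    have h := Real.add_one_le_exp (c i * t)
    have hp := Real.exp_pos (c i * t)
    rw [Real.exp_neg (c i * t)]
    have := mul_le_mul_of_nonneg_right h (le_of_lt (inv_pos.mpr hp))
    rw [mul_inv_cancel₀ (ne_of_gt hp)] at this
    nlinarith
  calc (∏ i ∈ s, c i) * t ^ s.card * Real.exp (-((∑ i ∈ s, c i) * t))
      = ∏ i ∈ s, (c i * t * Real.exp (-(c i) * t)) := by
        rw [Finset.prod_mul_distrib, Finset.prod_mul_distrib, Finset.prod_const, ← Real.exp_sum]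
        simp [Finset.sum_mul, neg_mul, Finset.sum_neg_distrib]
    _ ≤ _ := by
        apply Finset.prod_le_prod _ key
        intro i hi
        have h1 := Real.exp_pos (-(c i)*t)
        have h2 := hc i hi
        positivity

lemma exp_prod_mono (s : Finset ℕ) (c : ℕ → ℝ) (hc : ∀ i ∈ s, 0 < c i) {t t' : ℝ}
    (ht : 0 < t) (htt : t ≤ t') :
    ∏ i ∈ s, (1 - Real.exp (-(c i) * t)) ≤ ∏ i ∈ s, (1 - Real.exp (-(c i) * t')) := by
  apply Finset.prod_le_prod
  · intro i hi
    have : Real.exp (-(c i)*t) ≤ Real.exp 0 := Real.exp_le_exp.mpr (by nlinarith [hc i hi])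
    rw [Real.exp_zero] at this; linarith
  · intro i hi
    have : Real.exp (-(c i)*t') ≤ Real.exp (-(c i)*t) :=
      Real.exp_le_exp.mpr (by nlinarith [hc i hi])
    linarith


set_option maxHeartbeats 2000000

/-- asymptotics of the Mellin transform `η` of `β_{M,M−1}(a,b)`:
`|log η(q) − (∏_{j=1}^{M−1} b_j)/(∏_{i=1}^M a_i) · q log q| ≤ C q` for all `q ≥ 1`. -/
theorem stmt10 (M : ℕ) (hM : 0 < M) (a b : ℕ → ℝ)
    (ha : ∀ i ∈ Finset.Icc 1 M, 0 < a i)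
    (hb : ∀ j ∈ Finset.Icc 0 (M - 1), 0 < b j)
    (η : ℝ → ℝ)
    (hη : ∀ q : ℝ, -(b 0) < q → η q =
      Real.exp (∫ t in Set.Ioi (0:ℝ),
        ((Real.exp (-t * q) - 1) * Real.exp (-(b 0) * t) *
          (∏ j ∈ Finset.Icc 1 (M - 1), (1 - Real.exp (-(b j) * t))) /
          (∏ i ∈ Finset.Icc 1 M, (1 - Real.exp (-(a i) * t))) +
         q * Real.exp (-t) *
          (∏ j ∈ Finset.Icc 1 (M - 1), b j) / (∏ i ∈ Finset.Icc 1 M, a i)) / t)) :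
    ∃ C : ℝ, 0 < C ∧ ∀ q : ℝ, 1 ≤ q →
      |Real.log (η q) -
        (∏ j ∈ Finset.Icc 1 (M - 1), b j) / (∏ i ∈ Finset.Icc 1 M, a i) *
          (q * Real.log q)| ≤ C * q := by
  have hb0 : 0 < b 0 := hb 0 (Finset.mem_Icc.mpr ⟨le_refl 0, Nat.zero_le _⟩)
  have hbj : ∀ j ∈ Finset.Icc 1 (M-1), 0 < b j := fun j hj =>
    hb j (Finset.mem_Icc.mpr ⟨Nat.zero_le _, (Finset.mem_Icc.mp hj).2⟩)
  set A := ∏ i ∈ Finset.Icc 1 M, a i with hA_def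
  set B := ∏ j ∈ Finset.Icc 1 (M-1), b j with hB_def
  have hA : 0 < A := Finset.prod_pos ha
  have hB : 0 < B := Finset.prod_pos hbj
  set r := B / A with hr_def
  have hr : 0 < r := div_pos hB hA
  set S := ∑ i ∈ Finset.Icc 1 M, a i with hS_def
  set T := ∑ j ∈ Finset.Icc 1 (M-1), b j with hT_def
  have hS : 0 ≤ S := Finset.sum_nonneg (fun i hi => (ha i hi).le)
  have hT : 0 ≤ T := Finset.sum_nonneg (fun j hj => (hbj j hj).le)
  obtain ⟨K, hK_def⟩ : ∃ K : ℝ, K = S * Real.exp S + (b 0 + T) := ⟨_, rfl⟩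
  have hK : 0 ≤ K := by rw [hK_def]; positivity
  have hKge1 : b 0 + T ≤ K := by
    rw [hK_def]; nlinarith [mul_nonneg hS (Real.exp_pos S).le]
  have hKge2 : S * Real.exp S ≤ K := by
    rw [hK_def]; nlinarith [hb0, hT]
  have hcardA : (Finset.Icc 1 M).card = M := by rw [Nat.card_Icc]; omega
  have hcardB : (Finset.Icc 1 (M-1)).card = M - 1 := by rw [Nat.card_Icc]; omega
  have hMsucc : M - 1 + 1 = M := Nat.succ_pred_eq_of_pos hM
  set Pa : ℝ → ℝ := fun t => ∏ i ∈ Finset.Icc 1 M, (1 - Real.exp (-(a i) * t)) with hPa_def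
  set Pb : ℝ → ℝ := fun t => ∏ j ∈ Finset.Icc 1 (M-1), (1 - Real.exp (-(b j) * t)) with hPb_def
  set F : ℝ → ℝ := fun t => Real.exp (-(b 0) * t) * Pb t / Pa t with hF_def
  have hPa_pos : ∀ t : ℝ, 0 < t → 0 < Pa t := fun t ht => by
    simp only [hPa_def]; exact exp_prod_pos _ a ha t ht
  have hPb_pos : ∀ t : ℝ, 0 < t → 0 < Pb t := fun t ht => by
    simp only [hPb_def]; exact exp_prod_pos _ b hbj t ht
  have hPa1 : 0 < Pa 1 := hPa_pos 1 one_pos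
  have hPa_ub : ∀ t : ℝ, 0 < t → Pa t ≤ A * t ^ M := fun t ht => by
    have := exp_prod_upper (Finset.Icc 1 M) a ha t ht
    rw [hcardA, ← hA_def] at this
    simpa only [hPa_def] using this
  have hPa_lb : ∀ t : ℝ, 0 < t → A * t ^ M * Real.exp (-(S * t)) ≤ Pa t := fun t ht => by
    have := exp_prod_lower (Finset.Icc 1 M) a ha t ht
    rw [hcardA, ← hA_def, ← hS_def] at this
    simpa only [hPa_def] using this
  have hPb_ub : ∀ t : ℝ, 0 < t → Pb t ≤ B * t ^ (M-1) := fun t ht => by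
    have := exp_prod_upper (Finset.Icc 1 (M-1)) b hbj t ht
    rw [hcardB, ← hB_def] at this
    simpa only [hPb_def] using this
  have hPb_lb : ∀ t : ℝ, 0 < t → B * t ^ (M-1) * Real.exp (-(T * t)) ≤ Pb t := fun t ht => by
    have := exp_prod_lower (Finset.Icc 1 (M-1)) b hbj t ht
    rw [hcardB, ← hB_def, ← hT_def] at this
    simpa only [hPb_def] using this
  have hPb_le_one : ∀ t : ℝ, 0 < t → Pb t ≤ 1 := fun t ht => by
    simp only [hPb_def]; exact exp_prod_le_one _ b hbj t ht
  have hexpb0 : ∀ t : ℝ, 0 < t → Real.exp (-(b 0)*t) ≤ 1 := fun t ht => by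
    rw [← Real.exp_zero]
    exact Real.exp_le_exp.mpr (by nlinarith)
  have hF_pos : ∀ t : ℝ, 0 < t → 0 < F t := fun t ht => by
    simp only [hF_def]
    have h1 := hPa_pos t ht
    have h2 := hPb_pos t ht
    have h3 := Real.exp_pos (-(b 0)*t)
    positivity
  -- upper bound for F
  have hF_ub : ∀ t : ℝ, 0 < t → F t ≤ r / t * Real.exp (S * t) := by
    intro t ht
    have h1 := hPa_lb t ht
    have h2 := hPb_ub t ht
    have h3 := hPa_pos t ht
    have h4 := hexpb0 t ht
    have h5 := hPb_pos t ht
    have key : F t ≤ (B * t^(M-1)) / (A * t^M * Real.exp (-(S*t))) := by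
      simp only [hF_def]
      apply div_le_div₀ (by positivity) ?_
        (by positivity : (0:ℝ) < A * t^M * Real.exp (-(S*t))) h1
      nlinarith
    refine key.trans (le_of_eq ?_)
    rw [← hMsucc, pow_succ, hMsucc, Real.exp_neg, hr_def]
    have ht' : t ≠ 0 := ne_of_gt ht
    have hexp := Real.exp_pos (S*t)
    field_simp
  -- lower bound for F
  have hF_lb : ∀ t : ℝ, 0 < t → r / t * Real.exp (-((b 0 + T) * t)) ≤ F t := by
    intro t ht
    have h1 := hPa_ub t ht
    have h2 := hPb_lb t ht
    have h3 := hPa_pos t ht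
    have h5 := hPb_pos t ht
    have hexpb := Real.exp_pos (-(b 0)*t)
    have key : (Real.exp (-(b 0)*t) * (B * t^(M-1) * Real.exp (-(T*t)))) / (A * t^M) ≤ F t := by
      simp only [hF_def]
      apply div_le_div₀ (by positivity) ?_ h3 h1
      nlinarith
    refine le_trans (le_of_eq ?_) key
    have hee : Real.exp (-((b 0 + T)*t)) = Real.exp (-(b 0)*t) * Real.exp (-(T*t)) := by
      rw [← Real.exp_add]; ring_nf
    rw [hee, ← hMsucc, pow_succ, hMsucc, hr_def]
    have ht' : t ≠ 0 := ne_of_gt ht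
    have htM : t^(M-1) ≠ 0 := pow_ne_zero _ ht'
    field_simp
  -- |F - r/t| small-t bound
  have hF_small : ∀ t : ℝ, 0 < t → t ≤ 1 → |F t - r/t| ≤ r * K := by
    intro t ht ht1
    have hub := hF_ub t ht
    have hlb := hF_lb t ht
    have hu : 0 < r/t := div_pos hr ht
    rw [abs_le]
    constructor
    · have h1 : 1 - Real.exp (-((b 0 + T)*t)) ≤ (b 0 + T)*t := by
        linarith [Real.add_one_le_exp (-((b 0 + T)*t))]
      have hchain : r/t - F t ≤ r * (b 0 + T) := by
        calc r/t - F t ≤ r/t - r/t * Real.exp (-((b 0+T)*t)) := by linarith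
          _ = r/t * (1 - Real.exp (-((b 0+T)*t))) := by ring
          _ ≤ r/t * ((b 0+T)*t) := mul_le_mul_of_nonneg_left h1 hu.le
          _ = r * (b 0+T) := by field_simp
      have : r * (b 0 + T) ≤ r * K := mul_le_mul_of_nonneg_left hKge1 hr.le
      linarith
    · have hx : 1 - Real.exp (-(S*t)) ≤ S*t := by
        linarith [Real.add_one_le_exp (-(S*t))]
      have h1 : Real.exp (S*t) - 1 ≤ S*t*Real.exp (S*t) := by
        have hme := mul_le_mul_of_nonneg_right hx (Real.exp_pos (S*t)).le
        rw [sub_mul, one_mul, ← Real.exp_add] at hme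
        simpa using hme
      calc F t - r/t ≤ r/t*Real.exp (S*t) - r/t := by linarith
        _ = r/t * (Real.exp (S*t) - 1) := by ring
        _ ≤ r/t * (S*t*Real.exp (S*t)) := mul_le_mul_of_nonneg_left h1 hu.le
        _ = r * (S * Real.exp (S*t)) := by field_simp
        _ ≤ r * (S * Real.exp S) := by
            have hle : Real.exp (S*t) ≤ Real.exp S := Real.exp_le_exp.mpr (by nlinarith)
            exact mul_le_mul_of_nonneg_left (mul_le_mul_of_nonneg_left hle hS) hr.le
        _ ≤ r * K := mul_le_mul_of_nonneg_left hKge2 hr.le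
  -- large-t bound on F
  have hF_big : ∀ t : ℝ, 1 ≤ t → F t ≤ Real.exp (-(b 0) * t) / Pa 1 := by
    intro t ht
    have ht0 : (0:ℝ) < t := lt_of_lt_of_le one_pos ht
    have hmono : Pa 1 ≤ Pa t := by
      simp only [hPa_def]; exact exp_prod_mono _ a ha one_pos ht
    have h3 := hPa_pos t ht0
    simp only [hF_def]
    apply div_le_div₀ (Real.exp_pos (-(b 0)*t)).le ?_ hPa1 hmono
    nlinarith [hPb_le_one t ht0, Real.exp_pos (-(b 0)*t), hPb_pos t ht0]
  -- continuity
  have hPa_cont : Continuous Pa := by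
    simp only [hPa_def]
    exact continuous_finset_prod _ (fun i _ => by fun_prop)
  have hPb_cont : Continuous Pb := by
    simp only [hPb_def]
    exact continuous_finset_prod _ (fun i _ => by fun_prop)
  have hF_cont : ContinuousOn F (Ioi 0) := by
    rw [hF_def]
    exact ContinuousOn.div (by fun_prop) hPa_cont.continuousOn
      (fun t ht => ne_of_gt (hPa_pos t ht))
  -- the dominating function on [1, ∞)
  set G : ℝ → ℝ := fun t => Real.exp (-(b 0) * t) / Pa 1 + r * (1/t^2) with hG_def
  have hpow : IntegrableOn (fun t : ℝ => t ^ (-2 : ℝ)) (Ioi 1) :=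
    integrableOn_Ioi_rpow_of_lt (by norm_num) one_pos
  have hpow' : IntegrableOn (fun t : ℝ => 1/t^2) (Ioi 1) := by
    apply hpow.congr_fun (fun t ht => ?_) measurableSet_Ioi
    have ht1 : (0:ℝ) < t := lt_trans one_pos ht
    rw [Real.rpow_neg ht1.le, show ((2:ℝ)) = ((2:ℕ):ℝ) by norm_num, Real.rpow_natCast, one_div]
  have hG_int : IntegrableOn G (Ioi 1) := by
    simp only [hG_def]
    exact ((exp_neg_integrableOn_Ioi 1 hb0).div_const (Pa 1)).add (hpow'.const_mul r)
  obtain ⟨K2, hK2_def⟩ : ∃ K2 : ℝ, K2 = ∫ t in Ioi (1:ℝ), G t := ⟨_, rfl⟩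
  have hK2 : 0 ≤ K2 := by
    rw [hK2_def]
    apply setIntegral_nonneg measurableSet_Ioi
    intro t ht
    have ht0 : (0:ℝ) < t := lt_trans one_pos ht
    simp only [hG_def]
    have := Real.exp_pos (-(b 0)*t)
    positivity
  refine ⟨r + r*K + K2 + 1, by positivity, ?_⟩
  intro q hq
  have hq0 : 0 < q := lt_of_lt_of_le one_pos hq
  have hq' : -(b 0) < q := by linarith
  -- the remainder function
  set P2 : ℝ → ℝ := fun t => (Real.exp (-(q*t)) - 1) * (F t - r/t) / t with hP2_def
  have hP2_cont : ContinuousOn P2 (Ioi 0) := by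
    rw [hP2_def]
    apply ContinuousOn.div ?_ continuousOn_id (fun t ht => ne_of_gt ht)
    apply ContinuousOn.mul (by fun_prop)
    exact hF_cont.sub (ContinuousOn.div continuousOn_const continuousOn_id
      (fun t ht => ne_of_gt ht))
  have habs_exp : ∀ t : ℝ, 0 < t → |Real.exp (-(q*t)) - 1| ≤ min (q*t) 1 := by
    intro t ht
    have h1 : Real.exp (-(q*t)) ≤ 1 := by
      rw [← Real.exp_zero]; exact Real.exp_le_exp.mpr (by nlinarith)
    have h2 : 0 < Real.exp (-(q*t)) := Real.exp_pos _
    have h3 : 1 - Real.exp (-(q*t)) ≤ q*t := by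
      linarith [Real.add_one_le_exp (-(q*t))]
    rw [abs_sub_comm, abs_of_nonneg (by linarith)]
    exact le_min h3 (by linarith)
  have hP2_small : ∀ t ∈ Ioc (0:ℝ) 1, ‖P2 t‖ ≤ q * (r*K) := by
    intro t ht
    obtain ⟨ht0, ht1⟩ := ht
    have h1 := (habs_exp t ht0).trans (min_le_left _ _)
    have h2 := hF_small t ht0 ht1
    rw [Real.norm_eq_abs, hP2_def]
    rw [abs_div, abs_mul, abs_of_pos ht0]
    calc |Real.exp (-(q*t)) - 1| * |F t - r/t| / t ≤ (q*t) * (r*K) / t := by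
          exact (div_le_div_iff_of_pos_right ht0).mpr
            (mul_le_mul h1 h2 (abs_nonneg _) (by positivity))
      _ = q * (r*K) := by field_simp
  have hP2_big : ∀ t ∈ Ioi (1:ℝ), ‖P2 t‖ ≤ G t := by
    intro t ht
    have ht0 : (0:ℝ) < t := lt_trans one_pos ht
    have h1 := (habs_exp t ht0).trans (min_le_right _ _)
    have h2 : |F t - r/t| ≤ F t + r/t := by
      have := abs_sub (F t) (r/t)
      rw [abs_of_pos (hF_pos t ht0), abs_of_pos (div_pos hr ht0)] at this
      linarith [this]
    rw [Real.norm_eq_abs, hP2_def, abs_div, abs_mul, abs_of_pos ht0]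
    have hFb := hF_big t ht.le
    have hrt : r/t ≤ r := by
      rw [div_le_iff₀ ht0]
      have ht1 : (1:ℝ) < t := ht
      nlinarith [mul_nonneg hr.le (by linarith : (0:ℝ) ≤ t - 1)]
    calc |Real.exp (-(q*t)) - 1| * |F t - r/t| / t
        ≤ 1 * (F t + r/t) / t := by
          exact (div_le_div_iff_of_pos_right ht0).mpr
            (mul_le_mul h1 h2 (abs_nonneg _) one_pos.le)
      _ = F t / t + r/t^2 := by field_simp
      _ ≤ G t := by
          simp only [hG_def]
          have hFt : F t / t ≤ F t := by
            rw [div_le_iff₀ ht0]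
            have ht1 : (1:ℝ) < t := ht
            nlinarith [mul_nonneg (hF_pos t ht0).le (by linarith : (0:ℝ) ≤ t - 1)]
          have : r/t^2 = r * (1/t^2) := by ring
          rw [this]
          linarith [hFb, hFt]
  have hP2_int_small : IntegrableOn P2 (Ioc 0 1) := by
    apply Integrable.mono' (g := fun _ : ℝ => q * (r*K))
      ((integrableOn_const_iff).mpr (Or.inr (by simp)))
      ((hP2_cont.mono Ioc_subset_Ioi_self).aestronglyMeasurable measurableSet_Ioc)
    filter_upwards [ae_restrict_mem measurableSet_Ioc] with t ht
    exact hP2_small t ht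
  have hP2_int_big : IntegrableOn P2 (Ioi 1) := by
    apply Integrable.mono' hG_int
      ((hP2_cont.mono (Ioi_subset_Ioi zero_le_one)).aestronglyMeasurable measurableSet_Ioi)
    filter_upwards [ae_restrict_mem measurableSet_Ioi] with t ht
    exact hP2_big t ht
  have hP2_int : IntegrableOn P2 (Ioi 0) := by
    rw [← Ioc_union_Ioi_eq_Ioi (zero_le_one : (0:ℝ) ≤ 1)]
    exact hP2_int_small.union hP2_int_big
  -- bound on the integral of P2
  have hI2 : |∫ t in Ioi (0:ℝ), P2 t| ≤ q * (r*K) + K2 := by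
    rw [← Ioc_union_Ioi_eq_Ioi (zero_le_one : (0:ℝ) ≤ 1),
      setIntegral_union (Set.Ioc_disjoint_Ioi le_rfl) measurableSet_Ioi
        hP2_int_small hP2_int_big]
    have hb1 : ‖∫ t in Ioc (0:ℝ) 1, P2 t‖ ≤ q * (r*K) * (volume (Ioc (0:ℝ) 1)).toReal :=
      norm_setIntegral_le_of_norm_le_const (by simp)
        (fun t ht => hP2_small t ht)
    rw [Real.volume_Ioc] at hb1
    simp only [sub_zero, ENNReal.toReal_ofReal zero_le_one, mul_one] at hb1
    have hb2 : |∫ t in Ioi (1:ℝ), P2 t| ≤ K2 := by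
      rw [hK2_def]
      calc |∫ t in Ioi (1:ℝ), P2 t| ≤ ∫ t in Ioi (1:ℝ), ‖P2 t‖ := by
            simpa [Real.norm_eq_abs] using
              norm_integral_le_integral_norm (μ := volume.restrict (Ioi 1)) P2
        _ ≤ ∫ t in Ioi (1:ℝ), G t :=
            setIntegral_mono_on hP2_int_big.norm hG_int measurableSet_Ioi
              (fun t ht => hP2_big t ht)
    rw [Real.norm_eq_abs] at hb1
    calc |(∫ t in Ioc (0:ℝ) 1, P2 t) + ∫ t in Ioi (1:ℝ), P2 t|
        ≤ |∫ t in Ioc (0:ℝ) 1, P2 t| + |∫ t in Ioi (1:ℝ), P2 t| := abs_add_le _ _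
      _ ≤ q * (r*K) + K2 := add_le_add hb1 hb2
  -- Frullani and the J-lemma
  obtain ⟨hfr_int, hfr_val⟩ := frullani q hq
  obtain ⟨hJ_int, hJ_val⟩ := J_lemma q hq hfr_int hfr_val
  -- pointwise identity
  have hpt : ∀ t ∈ Ioi (0:ℝ),
      ((Real.exp (-t * q) - 1) * Real.exp (-(b 0) * t) * Pb t / Pa t
          + q * Real.exp (-t) * B / A) / t
        = r * (((Real.exp (-(q*t)) - 1)/t + q * Real.exp (-t))/t) + P2 t := by
    intro t ht
    have ht' : t ≠ 0 := ne_of_gt ht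
    have hPat : Pa t ≠ 0 := ne_of_gt (hPa_pos t ht)
    have hA' : A ≠ 0 := ne_of_gt hA
    simp only [hP2_def, hF_def, hr_def]
    rw [show -t*q = -(q*t) by ring]
    field_simp
    ring
  -- main computation
  have hlog : Real.log (η q) =
      ∫ t in Ioi (0:ℝ),
        ((Real.exp (-t * q) - 1) * Real.exp (-(b 0) * t) * Pb t / Pa t
          + q * Real.exp (-t) * B / A) / t := by
    rw [hη q hq', Real.log_exp]
  have hval : (∫ t in Ioi (0:ℝ),
        ((Real.exp (-t * q) - 1) * Real.exp (-(b 0) * t) * Pb t / Pa t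
          + q * Real.exp (-t) * B / A) / t)
      = r * (q * Real.log q - q) + ∫ t in Ioi (0:ℝ), P2 t := by
    rw [setIntegral_congr_fun measurableSet_Ioi hpt,
      integral_add (hJ_int.const_mul r) hP2_int, integral_const_mul, hJ_val]
  rw [hlog, hval]
  have hfin : |r * (q * Real.log q - q) + (∫ t in Ioi (0:ℝ), P2 t) - r * (q * Real.log q)|
      ≤ r*q + (q*(r*K) + K2) := by
    have : r * (q * Real.log q - q) + (∫ t in Ioi (0:ℝ), P2 t) - r * (q * Real.log q)
        = (∫ t in Ioi (0:ℝ), P2 t) - r*q := by ring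
    rw [this]
    calc |(∫ t in Ioi (0:ℝ), P2 t) - r*q| ≤ |∫ t in Ioi (0:ℝ), P2 t| + |r*q| := abs_sub _ _
      _ ≤ q*(r*K) + K2 + r*q := by
          rw [abs_of_pos (by positivity : 0 < r*q)]
          linarith [hI2]
      _ = r*q + (q*(r*K) + K2) := by ring
  refine hfin.trans ?_
  nlinarith [mul_nonneg hK2 (by linarith : (0:ℝ) ≤ q - 1), mul_nonneg (mul_nonneg hr.le hK) hq0.le]
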